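/- A linear operator T : H → Y from a Hilbert space H to a Banach space Y is compact if and only if T maps every orthonormal subset of H into a relatively compact subset of Y. -/

import Mathlib

open Submodule Metric Set Filter

set_option linter.unusedSectionVars false

section Aux

variable {𝕜 H Y : Type*} [RCLike 𝕜] [NormedAddCommGroup H] [InnerProductSpace 𝕜 H]
  [CompleteSpace H] [NormedAddCommGroup Y] [NormedSpace 𝕜 Y] [CompleteSpace Y]

local notation "⟪" x ", " y "⟫" => @inner 𝕜 _ _ x y

lemma aux_exists_orthonormal_seq (P : H → Prop)
    (h : ∀ l : List H, ∃ x : H, ‖x‖ = 1 ∧ (∀ v ∈ l, ⟪v, x⟫ = 0) ∧ P x) :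
    ∃ e : ℕ → H, Orthonormal 𝕜 e ∧ ∀ n, P (e n) := by
  classical
  choose f hf1 hf2 hf3 using h
  let L : ℕ → List H := fun n => Nat.rec [] (fun _ l => l ++ [f l]) n
  let e : ℕ → H := fun n => f (L n)
  have hmem : ∀ m n, m < n → e m ∈ L n := by
    intro m n hmn
    induction n with
    | zero => omega
    | succ k ih =>
      have hL : L (k + 1) = L k ++ [f (L k)] := rfl
      rw [hL]
      rcases Nat.lt_succ_iff_lt_or_eq.mp hmn with h' | h'
      · exact List.mem_append_left _ (ih h')
      · subst h'; exact List.mem_append_right _ (List.mem_singleton_self _)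
  have horth : ∀ m n, m < n → ⟪e m, e n⟫ = 0 := fun m n hmn => hf2 (L n) _ (hmem m n hmn)
  refine ⟨e, ?_, fun n => hf3 _⟩
  rw [orthonormal_iff_ite]
  intro i j
  rcases lt_trichotomy i j with h' | h' | h'
  · rw [if_neg h'.ne, horth i j h']
  · subst h'; rw [if_pos rfl, inner_self_eq_norm_sq_to_K, hf1]; norm_num
  · rw [if_neg h'.ne', ← inner_conj_symm, horth j i h', map_zero]


lemma aux_key (T : H →ₗ[𝕜] Y)
    (h : ∀ S : Set H, Orthonormal 𝕜 ((↑) : S → H) → IsCompact (closure (T '' S)))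
    {δ : ℝ} (hδ : 0 < δ) (e : ℕ → H) (he : Orthonormal 𝕜 e)
    (hbd : ∀ n, δ ≤ ‖T (e n)‖) : False := by
  classical
  have hK : IsCompact (closure (T '' Set.range e)) := h _ he.toSubtypeRange
  have hmem : ∀ n, T (e n) ∈ closure (T '' Set.range e) :=
    fun n => subset_closure ⟨e n, Set.mem_range_self n, rfl⟩
  obtain ⟨y, -, φ, hφ, hconv⟩ := hK.tendsto_subseq hmem
  have hy : δ ≤ ‖y‖ := ge_of_tendsto hconv.norm (Eventually.of_forall fun k => hbd (φ k))
  have hy0 : 0 < ‖y‖ := lt_of_lt_of_le hδ hy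
  obtain ⟨N, hN⟩ := (Metric.tendsto_atTop.mp hconv) (‖y‖ / 2) (by positivity)
  set tri : ℕ → ℕ := fun m => ∑ j ∈ Finset.range m, (j + 1) with htri
  have htri_succ : ∀ m, tri (m + 1) = tri m + (m + 1) := fun m => Finset.sum_range_succ _ m
  have htri_mono : Monotone tri := by
    intro p q hpq
    exact Finset.sum_le_sum_of_subset (Finset.range_subset_range.mpr hpq)
  set a : ℕ → ℕ → ℕ := fun m i => N + tri m + i with ha
  have ha_lt : ∀ {m m' : ℕ}, m < m' → ∀ {i}, i < m + 1 → ∀ (j : ℕ), a m i < a m' j := by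
    intro m m' hmm' i hi j
    have h1 : a m i < N + tri (m + 1) := by
      simp only [ha, htri_succ]; omega
    have h2 : tri (m + 1) ≤ tri m' := htri_mono hmm'
    simp only [ha] at *; omega
  have ha_ne : ∀ {m m' : ℕ}, m ≠ m' → ∀ {i j : ℕ}, i < m + 1 → j < m' + 1 →
      a m i ≠ a m' j := by
    intro m m' hmm' i j hi hj
    rcases hmm'.lt_or_gt with hlt | hlt
    · exact (ha_lt hlt hi j).ne
    · exact (ha_lt hlt hj i).ne'
  have ha_inj : ∀ {m i j : ℕ}, a m i = a m j → i = j := by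
    intro m i j hij; simp only [ha] at hij; omega
  set c : ℕ → ℝ := fun m => (Real.sqrt (m + 1))⁻¹ with hc
  have hsqpos : ∀ m : ℕ, 0 < Real.sqrt (m + 1) := fun m => Real.sqrt_pos.mpr (by positivity)
  have hcpos : ∀ m : ℕ, 0 < c m := fun m => inv_pos.mpr (hsqpos m)
  have hcc : ∀ m : ℕ, c m * c m * ((m : ℝ) + 1) = 1 := by
    intro m
    rw [hc, ← mul_inv, Real.mul_self_sqrt (by positivity)]
    field_simp
  have hcs : ∀ m : ℕ, c m * ((m : ℝ) + 1) = Real.sqrt (m + 1) := by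
    intro m
    rw [hc]
    rw [show ((m : ℝ) + 1) = Real.sqrt (m + 1) * Real.sqrt (m + 1) from
      (Real.mul_self_sqrt (by positivity)).symm]
    field_simp
    rw [Real.sq_sqrt (by positivity)]
  set f : ℕ → H := fun m => ((c m : ℝ) : 𝕜) • ∑ i ∈ Finset.range (m + 1), e (φ (a m i)) with hf
  have he' := orthonormal_iff_ite.mp he
  have hinner : ∀ m m', ⟪f m, f m'⟫ = ((c m * c m' : ℝ) : 𝕜) *
      ∑ i ∈ Finset.range (m + 1), ∑ j ∈ Finset.range (m' + 1),
        (if φ (a m i) = φ (a m' j) then (1 : 𝕜) else 0) := by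
    intro m m'
    simp only [hf, inner_smul_left, inner_smul_right, sum_inner, inner_sum, RCLike.conj_ofReal,
      he']
    push_cast
    simp only [Finset.mul_sum]
    rw [Finset.sum_comm]
    refine Finset.sum_congr rfl fun i _ => ?_
    refine Finset.sum_congr rfl fun j _ => ?_
    ring
  have hfon : Orthonormal 𝕜 f := by
    rw [orthonormal_iff_ite]
    intro m m'
    rcases eq_or_ne m m' with rfl | hne
    · rw [hinner, if_pos rfl]
      have hrow : ∀ i ∈ Finset.range (m + 1),
          (∑ j ∈ Finset.range (m + 1), (if φ (a m i) = φ (a m j) then (1 : 𝕜) else 0)) = 1 := by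
        intro i hi
        rw [Finset.sum_eq_single i]
        · simp
        · intro j hj hji
          rw [if_neg]
          intro hEq
          exact hji (ha_inj (hφ.injective hEq)).symm
        · intro hi'; exact absurd hi hi'
      rw [Finset.sum_congr rfl hrow, Finset.sum_const, Finset.card_range, nsmul_eq_mul, mul_one]
      have hcast : ((c m * c m : ℝ) : 𝕜) * ((m + 1 : ℕ) : 𝕜) =
          ((c m * c m * ((m : ℝ) + 1) : ℝ) : 𝕜) := by push_cast; ring
      rw [hcast, hcc m]
      norm_num
    · rw [hinner, if_neg hne]
      rw [Finset.sum_eq_zero, mul_zero]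
      intro i hi
      rw [Finset.sum_eq_zero]
      intro j hj
      rw [if_neg]
      exact fun hEq => ha_ne hne (Finset.mem_range.mp hi) (Finset.mem_range.mp hj)
        (hφ.injective hEq)
  have hTf : ∀ m : ℕ, Real.sqrt (m + 1) * (‖y‖ / 2) ≤ ‖T (f m)‖ := by
    intro m
    have hsum : (∑ i ∈ Finset.range (m + 1), T (e (φ (a m i)))) =
        (((m : ℕ) + 1 : 𝕜)) • y + ∑ i ∈ Finset.range (m + 1), (T (e (φ (a m i))) - y) := by
      rw [Finset.sum_sub_distrib, Finset.sum_const, Finset.card_range]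
      rw [← Nat.cast_smul_eq_nsmul 𝕜 (m + 1) y]
      push_cast
      abel
    have hTfm : T (f m) = ((c m : ℝ) : 𝕜) •
        ((((m : ℕ) + 1 : 𝕜)) • y + ∑ i ∈ Finset.range (m + 1), (T (e (φ (a m i))) - y)) := by
      rw [hf, map_smul, map_sum, hsum]
    have herr : ‖∑ i ∈ Finset.range (m + 1), (T (e (φ (a m i))) - y)‖ ≤
        ((m : ℝ) + 1) * (‖y‖ / 2) := by
      refine le_trans (norm_sum_le _ _) ?_
      have : ∀ i ∈ Finset.range (m + 1), ‖T (e (φ (a m i))) - y‖ ≤ ‖y‖ / 2 := by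
        intro i _
        have hge : N ≤ a m i := by simp only [ha]; omega
        have := hN (a m i) hge
        rw [dist_eq_norm] at this
        exact this.le
      refine le_trans (Finset.sum_le_sum this) ?_
      rw [Finset.sum_const, Finset.card_range, nsmul_eq_mul]
      push_cast
      exact le_rfl
    set A := (((m : 𝕜) + 1)) • y with hA'
    set B := ∑ i ∈ Finset.range (m + 1), (T (e (φ (a m i))) - y) with hB'
    have hA : ‖A‖ = ((m : ℝ) + 1) * ‖y‖ := by
      rw [hA', norm_smul]
      congr 1
      rw [show ((m : 𝕜) + 1) = ((m + 1 : ℕ) : 𝕜) by push_cast; ring, RCLike.norm_natCast]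
      push_cast
      ring
    have h4 : ‖A‖ ≤ ‖A + B‖ + ‖B‖ := by
      calc ‖A‖ = ‖A + B - B‖ := by rw [add_sub_cancel_right]
        _ ≤ ‖A + B‖ + ‖B‖ := norm_sub_le _ _
    have hAB : ((m : ℝ) + 1) * (‖y‖ / 2) ≤ ‖A + B‖ := by linarith
    rw [hTfm, norm_smul, RCLike.norm_ofReal, abs_of_pos (hcpos m)]
    calc Real.sqrt ((m : ℝ) + 1) * (‖y‖ / 2) = c m * (((m : ℝ) + 1) * (‖y‖ / 2)) := by
          rw [← hcs m]; ring
      _ ≤ c m * ‖A + B‖ := mul_le_mul_of_nonneg_left hAB (hcpos m).le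
  have hK2 : IsCompact (closure (T '' Set.range f)) := h _ hfon.toSubtypeRange
  obtain ⟨C, hC⟩ := isBounded_iff_forall_norm_le.mp hK2.isBounded
  obtain ⟨m, hm⟩ := exists_nat_gt ((2 * C / ‖y‖) ^ 2)
  have hCm : ‖T (f m)‖ ≤ C := hC _ (subset_closure ⟨f m, Set.mem_range_self m, rfl⟩)
  have hC0 : 0 ≤ C := le_trans (norm_nonneg _) hCm
  have hlt : 2 * C / ‖y‖ < Real.sqrt ((m : ℝ) + 1) := by
    have h1 : (2 * C / ‖y‖) ^ 2 < (m : ℝ) + 1 := lt_of_lt_of_le hm (by linarith)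
    have h0 : 0 ≤ 2 * C / ‖y‖ := by positivity
    nlinarith [Real.sq_sqrt (show (0:ℝ) ≤ (m : ℝ) + 1 by positivity),
      Real.sqrt_nonneg ((m : ℝ) + 1)]
  have hlb := hTf m
  have hfinal : C < Real.sqrt ((m : ℝ) + 1) * (‖y‖ / 2) := by
    have hmul := mul_lt_mul_of_pos_right hlt (show (0:ℝ) < ‖y‖ / 2 by positivity)
    have heq : 2 * C / ‖y‖ * (‖y‖ / 2) = C := by field_simp
    linarith
  linarith


lemma aux_findim (T : H →ₗ[𝕜] Y)
    (h : ∀ S : Set H, Orthonormal 𝕜 ((↑) : S → H) → IsCompact (closure (T '' S)))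
    {ε : ℝ} (hε : 0 < ε) :
    ∃ F : Submodule 𝕜 H, FiniteDimensional 𝕜 F ∧ ∀ x ∈ Fᗮ, ‖T x‖ ≤ ε * ‖x‖ := by
  by_contra hc
  push_neg at hc
  have claim : ∀ l : List H, ∃ x : H, ‖x‖ = 1 ∧ (∀ v ∈ l, ⟪v, x⟫ = 0) ∧ ε ≤ ‖T x‖ := by
    intro l
    have hfin : FiniteDimensional 𝕜 (Submodule.span 𝕜 {v | v ∈ l}) :=
      FiniteDimensional.span_of_finite _ (List.finite_toSet l)
    obtain ⟨x, hxF, hx⟩ := hc _ hfin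
    have hx' : ε * ‖x‖ < ‖T x‖ := hx
    have hx0 : x ≠ 0 := by
      rintro rfl
      simp only [map_zero, norm_zero, mul_zero] at hx'
      exact lt_irrefl 0 hx'
    have hxn : (0:ℝ) < ‖x‖ := norm_pos_iff.mpr hx0
    set k : 𝕜 := ((‖x‖ : ℝ) : 𝕜)⁻¹ with hk
    have hknorm : ‖k‖ = ‖x‖⁻¹ := by
      rw [hk, norm_inv, RCLike.norm_ofReal, abs_of_pos hxn]
    refine ⟨k • x, ?_, ?_, ?_⟩
    · rw [norm_smul, hknorm, inv_mul_cancel₀ hxn.ne']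
    · intro v hv
      have hmem : k • x ∈ (Submodule.span 𝕜 {v | v ∈ l})ᗮ := Submodule.smul_mem _ _ hxF
      exact (Submodule.mem_orthogonal _ _).mp hmem v (Submodule.subset_span hv)
    · rw [map_smul, norm_smul, hknorm]
      rw [← mul_le_mul_iff_right₀ hxn]
      calc ‖x‖ * ε = ε * ‖x‖ := by ring
        _ ≤ ‖T x‖ := hx'.le
        _ = ‖x‖ * (‖x‖⁻¹ * ‖T x‖) := by field_simp
  obtain ⟨e, he, hbd⟩ := aux_exists_orthonormal_seq (fun x => ε ≤ ‖T x‖) claim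
  exact aux_key T h hε e he hbd

lemma aux_norm_sub_proj_le (F : Submodule 𝕜 H) [CompleteSpace F] (x : H) :
    ‖x - (orthogonalProjection F x : H)‖ ≤ ‖x‖ := by
  rw [show x - (orthogonalProjection F x : H) = (orthogonalProjection Fᗮ x : H) from
    (starProjection_orthogonal_val (K := F) x).symm]
  have h1 := norm_sq_eq_add_norm_sq_projection x F
  have h2 : ‖(orthogonalProjection Fᗮ x : H)‖ = ‖orthogonalProjection Fᗮ x‖ := rfl
  have h3 : ‖(orthogonalProjection F x : H)‖ = ‖orthogonalProjection F x‖ := rfl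
  nlinarith [norm_nonneg (orthogonalProjection Fᗮ x), norm_nonneg x,
    norm_nonneg (orthogonalProjection F x)]

theorem compact_iff_image_of_orthonormal_sets_relatively_compact'
    (T : H →ₗ[𝕜] Y) :
    (Continuous T ∧ IsCompact (closure (T '' Metric.closedBall (0 : H) 1))) ↔
      ∀ S : Set H, Orthonormal 𝕜 ((↑) : S → H) → IsCompact (closure (T '' S)) := by
  constructor
  · rintro ⟨hcont, hcomp⟩ S hS
    have hsub : T '' S ⊆ T '' Metric.closedBall 0 1 := by
      apply Set.image_mono
      intro x hx
      have h1 : ‖(((⟨x, hx⟩ : S) : H))‖ = 1 := hS.1 ⟨x, hx⟩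
      simp only [Metric.mem_closedBall, dist_zero_right]
      simp only at h1
      rw [h1]
    exact hcomp.of_isClosed_subset isClosed_closure (closure_mono hsub)
  · intro h
    obtain ⟨F₁, hF₁fin, hF₁⟩ := aux_findim T h one_pos
    haveI := hF₁fin
    haveI : CompleteSpace F₁ := FiniteDimensional.complete 𝕜 F₁
    set T₁ : F₁ →L[𝕜] Y :=
      ⟨T.comp F₁.subtype, LinearMap.continuous_of_finiteDimensional _⟩ with hT₁
    have hbound : ∀ x : H, ‖T x‖ ≤ (‖T₁‖ + 1) * ‖x‖ := by
      intro x
      set p : H := ((orthogonalProjection F₁ x : F₁) : H) with hp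
      have hdec : T x = T p + T (x - p) := by rw [← map_add]; congr 1; abel
      have h2 : ‖T p‖ ≤ ‖T₁‖ * ‖x‖ := by
        have hTp : T p = T₁ (orthogonalProjection F₁ x) := rfl
        rw [hTp]
        refine le_trans (T₁.le_opNorm _) ?_
        refine mul_le_mul_of_nonneg_left ?_ (norm_nonneg _)
        refine le_trans ((orthogonalProjection F₁).le_opNorm x) ?_
        calc ‖orthogonalProjection F₁‖ * ‖x‖ ≤ 1 * ‖x‖ :=
              mul_le_mul_of_nonneg_right (orthogonalProjection_norm_le _) (norm_nonneg _)
          _ = ‖x‖ := one_mul _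
      have h3 : ‖T (x - p)‖ ≤ 1 * ‖x‖ := by
        have hmem : x - p ∈ F₁ᗮ := sub_starProjection_mem_orthogonal (K := F₁) x
        refine le_trans (hF₁ _ hmem) ?_
        exact mul_le_mul_of_nonneg_left (aux_norm_sub_proj_le F₁ x) zero_le_one
      calc ‖T x‖ = ‖T p + T (x - p)‖ := by rw [← hdec]
        _ ≤ ‖T p‖ + ‖T (x - p)‖ := norm_add_le _ _
        _ ≤ ‖T₁‖ * ‖x‖ + 1 * ‖x‖ := add_le_add h2 h3
        _ = (‖T₁‖ + 1) * ‖x‖ := by ring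
    have hcont : Continuous T := AddMonoidHomClass.continuous_of_bound T _ hbound
    refine ⟨hcont, ?_⟩
    set T' : H →L[𝕜] Y := ⟨T, hcont⟩ with hT'
    have hFn : ∀ n : ℕ, ∃ F : Submodule 𝕜 H, FiniteDimensional 𝕜 F ∧
        ∀ x ∈ Fᗮ, ‖T x‖ ≤ (1 / ((n : ℝ) + 1)) * ‖x‖ :=
      fun n => aux_findim T h (by positivity)
    choose F hFfin hFbd using hFn
    let P : (n : ℕ) → H →L[𝕜] (F n) := fun n =>
      haveI := hFfin n
      haveI : CompleteSpace (F n) := FiniteDimensional.complete 𝕜 (F n)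
      orthogonalProjection (F n)
    let Tn : ℕ → H →L[𝕜] Y := fun n => T'.comp (((F n).subtypeL).comp (P n))
    have hcompn : ∀ n, IsCompactOperator (Tn n) := by
      intro n
      haveI := hFfin n
      haveI : CompleteSpace (F n) := FiniteDimensional.complete 𝕜 (F n)
      haveI : ProperSpace (F n) := FiniteDimensional.proper_rclike 𝕜 (F n)
      refine ((isCompactOperator_iff_image_closedBall_subset_compact
        ((Tn n).toLinearMap) zero_lt_one).mpr ?_)
      refine ⟨(T'.comp (F n).subtypeL) '' Metric.closedBall 0 1, ?_, ?_⟩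
      · exact ((isCompact_closedBall (0 : F n) 1).image (T'.comp (F n).subtypeL).continuous)
      · rintro z ⟨x, hx, rfl⟩
        refine ⟨P n x, ?_, rfl⟩
        rw [Metric.mem_closedBall, dist_zero_right] at hx ⊢
        refine le_trans ((P n).le_opNorm x) ?_
        calc ‖P n‖ * ‖x‖ ≤ 1 * ‖x‖ :=
              mul_le_mul_of_nonneg_right (orthogonalProjection_norm_le _) (norm_nonneg _)
          _ ≤ 1 := by rw [one_mul]; exact hx
    have hTnconv : Filter.Tendsto Tn Filter.atTop (nhds T') := by
      rw [tendsto_iff_norm_sub_tendsto_zero]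
      refine squeeze_zero (fun n => norm_nonneg _) (fun n => ?_)
        tendsto_one_div_add_atTop_nhds_zero_nat
      haveI := hFfin n
      haveI : CompleteSpace (F n) := FiniteDimensional.complete 𝕜 (F n)
      refine ContinuousLinearMap.opNorm_le_bound _ (by positivity) fun x => ?_
      have hxm : x - ((orthogonalProjection (F n) x : F n) : H) ∈ (F n)ᗮ :=
        sub_starProjection_mem_orthogonal (K := F n) x
      have heq : (Tn n - T') x = -(T (x - ((orthogonalProjection (F n) x : F n) : H))) := by
        simp only [ContinuousLinearMap.sub_apply, ContinuousLinearMap.comp_apply]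
        rw [map_sub]
        have : Tn n x = T ((orthogonalProjection (F n) x : F n) : H) := rfl
        simp only [Tn, P, ContinuousLinearMap.comp_apply]
        rw [neg_sub]
        rfl
      rw [heq, norm_neg]
      calc ‖T (x - ((orthogonalProjection (F n) x : F n) : H))‖
          ≤ (1 / ((n : ℝ) + 1)) * ‖x - ((orthogonalProjection (F n) x : F n) : H)‖ :=
            hFbd n _ hxm
        _ ≤ (1 / ((n : ℝ) + 1)) * ‖x‖ :=
            mul_le_mul_of_nonneg_left (aux_norm_sub_proj_le (F n) x) (by positivity)
    have hcpt : IsCompactOperator T' :=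
      isCompactOperator_of_tendsto hTnconv (Filter.Eventually.of_forall hcompn)
    exact IsCompactOperator.isCompact_closure_image_closedBall (𝕜₁ := 𝕜) (f := T) hcpt 1

end Aux


theorem compact_iff_image_of_orthonormal_sets_relatively_compact
    {𝕜 H Y : Type*} [RCLike 𝕜] [NormedAddCommGroup H] [InnerProductSpace 𝕜 H]
    [CompleteSpace H] [NormedAddCommGroup Y] [NormedSpace 𝕜 Y] [CompleteSpace Y]
    (T : H →ₗ[𝕜] Y) :
    (Continuous T ∧ IsCompact (closure (T '' Metric.closedBall (0 : H) 1))) ↔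
      ∀ S : Set H, Orthonormal 𝕜 ((↑) : S → H) → IsCompact (closure (T '' S)) := by
  exact compact_iff_image_of_orthonormal_sets_relatively_compact' T
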